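/- Let ∇⁻ be the discrete derivative ∇⁻f(x) = f(x) − f(x−1) on functions ℤ → ℝ, and Q(x,y) = 2^{y−x}𝟙{x>y}. Then the kernel of e^{−(t/2)∇⁻} Q^{−n} composed appropriately, i.e. S(z_1,z_2) := (e^{−(t/2)∇⁻} Q^{−n})*(z_1,z_2), is given by the contour integral (1/2πi)∮_{Γ_0} dw (1−w)^n e^{t(w−1/2)} / (2^{z_2−z_1} w^{n+1+z_2−z_1}). -/

import Mathlib

open Complex

/-- Kernel of `e^{a∇⁻}`, defined via the power series in `∇⁻` (whose `k`-th power has kernel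
`(∇⁻)^k(x,y) = (−1)^{x−y} C(k, x−y) 𝟙{0 ≤ x−y ≤ k}`). -/
noncomputable def expNablaMinusKer (a : ℝ) (x y : ℤ) : ℂ :=
  ∑' k : ℕ, (a : ℂ) ^ k / (Nat.factorial k : ℂ) *
    (if 0 ≤ x - y ∧ x - y ≤ (k : ℤ) then
      (-1 : ℂ) ^ (x - y).toNat * (Nat.choose k (x - y).toNat : ℂ) else 0)

/-- Kernel of `Q⁻¹ = I + 2∇⁺`: `(Q⁻¹f)(x) = −f(x) + 2f(x+1)`. -/
noncomputable def QinvKer (x y : ℤ) : ℂ :=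
  (if y = x then -1 else 0) + (if y = x + 1 then 2 else 0)

/-- Kernel of `Q^{−n} = (I + 2∇⁺)^n`. -/
noncomputable def QinvPow : ℕ → ℤ → ℤ → ℂ
  | 0 => fun x y => if x = y then 1 else 0
  | n + 1 => fun x y => ∑' z : ℤ, QinvPow n x z * QinvKer z y

lemma iteratedDeriv_exp_mul (t : ℂ) (m : ℕ) :
    iteratedDeriv m (fun z : ℂ => Complex.exp (t * z)) = fun z => t ^ m * Complex.exp (t * z) := by
  induction m with
  | zero => simp [iteratedDeriv_zero]
  | succ m ih =>
    rw [iteratedDeriv_succ, ih]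
    funext z
    have h : HasDerivAt (fun z : ℂ => t ^ m * Complex.exp (t * z))
        (t ^ m * (Complex.exp (t * z) * t)) z := by
      have := (((hasDerivAt_id z).const_mul t).cexp).const_mul (t ^ m)
      simpa using this
    rw [h.deriv]; ring

lemma key_integral (t : ℂ) (R : ℝ) (hR : 0 < R) (m : ℕ) :
    (∮ z in C(0, R), Complex.exp (t * z) * (z : ℂ) ^ (-(m : ℤ) - 1)) =
      (2 * Real.pi * I) * (t ^ m / (Nat.factorial m : ℂ)) := by
  set f : ℂ → ℂ := fun z => Complex.exp (t * z) with hf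
  have hd : Differentiable ℂ f := (differentiable_const t |>.mul differentiable_id).cexp
  lift R to NNReal using hR.le with R' hR'
  have hR0 : 0 < R' := by exact_mod_cast hR
  have H := hd.hasFPowerSeriesOnBall 0 hR0
  have h1 := H.factorial_smul 1 m
  have h2 := cauchyPowerSeries_apply f 0 (R' : ℝ) m 1
  rw [h2] at h1
  have h3 : (iteratedFDeriv ℂ m f 0 fun _ => (1:ℂ)) = t ^ m := by
    rw [← iteratedDeriv_eq_iteratedFDeriv, iteratedDeriv_exp_mul]
    simp
  rw [h3] at h1
  have h4 : (∮ z in C((0:ℂ), (R':ℝ)), ((1:ℂ) / (z - 0)) ^ m • (z - 0)⁻¹ • f z)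
      = ∮ z in C((0:ℂ), (R':ℝ)), Complex.exp (t * z) * z ^ (-(m : ℤ) - 1) := by
    refine circleIntegral.integral_congr hR.le fun z hz => ?_
    have hz0 : z ≠ 0 := by
      intro h; rw [Metric.mem_sphere, h] at hz; simp at hz; exact hR.ne' hz.symm
    simp only [sub_zero, smul_eq_mul, one_div]
    rw [inv_pow, ← zpow_natCast z m, ← zpow_neg, ← zpow_neg_one, ← mul_assoc,
      ← zpow_add₀ hz0, mul_comm, sub_eq_add_neg]
  rw [h4] at h1
  have h2πi : (2 * (Real.pi:ℂ) * I) ≠ 0 := by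
    simp [Real.pi_ne_zero, I_ne_zero]
  have hfac : (Nat.factorial m : ℂ) ≠ 0 := by exact_mod_cast Nat.factorial_ne_zero m
  rw [smul_eq_mul, nsmul_eq_mul] at h1
  field_simp at h1 ⊢
  linear_combination h1

lemma entire_integral_zero (t : ℂ) (R : ℝ) (hR : 0 < R) (k : ℕ) :
    (∮ z in C(0, R), Complex.exp (t * z) * (z : ℂ) ^ k) = 0 := by
  refine circleIntegral_eq_zero_of_differentiable_on_off_countable hR.le Set.countable_empty
    ?_ fun z _ => ?_
  · exact ((Complex.continuous_exp.comp (continuous_const.mul continuous_id)).mul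
      (continuous_pow k)).continuousOn
  · exact ((differentiable_const t |>.mul differentiable_id).cexp.mul
      (differentiable_pow k)).differentiableAt

-- combined: for any k : ℤ
lemma exp_zpow_integral (t : ℂ) (R : ℝ) (hR : 0 < R) (k : ℤ) :
    (∮ z in C(0, R), Complex.exp (t * z) * (z : ℂ) ^ k) =
      if 0 ≤ -k - 1 then (2 * Real.pi * I) * (t ^ (-k - 1).toNat / (Nat.factorial (-k - 1).toNat : ℂ))
      else 0 := by
  by_cases hk : 0 ≤ -k - 1
  · have hkk : k = -((-k - 1).toNat : ℤ) - 1 := by omega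
    rw [if_pos hk]
    calc (∮ z in C(0, R), Complex.exp (t * z) * (z : ℂ) ^ k)
        = ∮ z in C(0, R), Complex.exp (t * z) * (z : ℂ) ^ (-((-k - 1).toNat : ℤ) - 1) := by
          rw [← hkk]
      _ = _ := key_integral t R hR _
  · rw [if_neg hk]
    have hkk : k = ((k.toNat : ℤ)) := by omega
    have : (fun z : ℂ => Complex.exp (t * z) * z ^ k)
        = fun z : ℂ => Complex.exp (t * z) * z ^ (k.toNat) := by
      funext z; conv_lhs => rw [hkk, zpow_natCast]
    rw [show (∮ z in C(0, R), Complex.exp (t * z) * (z:ℂ) ^ k)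
        = ∮ z in C(0, R), Complex.exp (t * z) * (z:ℂ) ^ (k.toNat) from
      circleIntegral.integral_congr hR.le fun z _ => congrFun this z]
    exact entire_integral_zero t R hR _

-- integrability
lemma exp_zpow_circleIntegrable (t : ℂ) (R : ℝ) (hR : 0 < R) (k : ℤ) :
    CircleIntegrable (fun z => Complex.exp (t * z) * (z : ℂ) ^ k) 0 R := by
  apply Continuous.intervalIntegrable
  apply Continuous.mul
  · exact Complex.continuous_exp.comp (continuous_const.mul (continuous_circleMap 0 R))
  · apply Continuous.zpow₀ (continuous_circleMap 0 R)
    intro θ; left; exact circleMap_ne_center hR.ne'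

lemma circleIntegral_finset_sum {ι : Type*} (s : Finset ι) (f : ι → ℂ → ℂ) (c : ℂ) (R : ℝ)
    (h : ∀ i ∈ s, CircleIntegrable (f i) c R) :
    (∮ z in C(c, R), ∑ i ∈ s, f i z) = ∑ i ∈ s, ∮ z in C(c, R), f i z := by
  simp only [circleIntegral, Finset.smul_sum]
  exact intervalIntegral.integral_finset_sum fun i hi => (h i hi).out

lemma expNablaMinusKer_eq (a : ℝ) (x y : ℤ) :
    expNablaMinusKer a x y = if 0 ≤ x - y then
      Complex.exp a * (-(a:ℂ)) ^ (x - y).toNat / (Nat.factorial (x - y).toNat : ℂ) else 0 := by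
  rw [expNablaMinusKer]
  by_cases h : 0 ≤ x - y
  · rw [if_pos h]
    set d := (x - y).toNat with hd
    have hdz : (d : ℤ) = x - y := Int.toNat_of_nonneg h
    have hg : ∀ k : ℕ, ((a : ℂ) ^ k / (Nat.factorial k : ℂ) *
        (if 0 ≤ x - y ∧ x - y ≤ (k : ℤ) then
          (-1 : ℂ) ^ d * (Nat.choose k d : ℂ) else 0))
        = (a : ℂ) ^ k / (Nat.factorial k : ℂ) * ((-1 : ℂ) ^ d * (Nat.choose k d : ℂ)) := by
      intro k
      by_cases hk : x - y ≤ (k : ℤ)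
      · rw [if_pos ⟨h, hk⟩]
      · rw [if_neg (by tauto)]
        have : Nat.choose k d = 0 := Nat.choose_eq_zero_of_lt (by omega)
        rw [this]; simp
    have hbase : HasSum (fun i : ℕ => (a : ℂ) ^ i / (Nat.factorial i : ℂ)) (Complex.exp a) := by
      rw [Complex.exp_eq_exp_ℂ]
      exact NormedSpace.expSeries_div_hasSum_exp (a : ℂ)
    have hmul := hbase.mul_left ((-1 : ℂ) ^ d * (a:ℂ) ^ d / (Nat.factorial d : ℂ))
    set g : ℕ → ℂ := fun k => (a : ℂ) ^ k / (Nat.factorial k : ℂ) *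
        ((-1 : ℂ) ^ d * (Nat.choose k d : ℂ)) with hgdef
    have hinj : Function.Injective (fun i : ℕ => i + d) := add_left_injective d
    have hout : ∀ k ∉ Set.range (fun i : ℕ => i + d), g k = 0 := by
      intro k hk
      have hkd : k < d := by
        by_contra hc; exact hk ⟨k - d, by simpa using (by omega : k - d + d = k)⟩
      have : Nat.choose k d = 0 := Nat.choose_eq_zero_of_lt hkd
      simp [hgdef, this]
    have hcomp : (g ∘ fun i : ℕ => i + d)
        = fun i => ((-1 : ℂ) ^ d * (a:ℂ) ^ d / (Nat.factorial d : ℂ)) *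
            ((a : ℂ) ^ i / (Nat.factorial i : ℂ)) := by
      funext i
      have key : ((Nat.choose (i + d) d : ℕ) : ℂ) * (Nat.factorial i : ℂ) * (Nat.factorial d : ℂ)
          = ((Nat.factorial (i + d) : ℕ) : ℂ) := by
        exact_mod_cast congrArg (Nat.cast : ℕ → ℂ)
          (Nat.add_choose_mul_factorial_mul_factorial i d)
      have hfi : (Nat.factorial i : ℂ) ≠ 0 := by exact_mod_cast Nat.factorial_ne_zero i
      have hfd : (Nat.factorial d : ℂ) ≠ 0 := by exact_mod_cast Nat.factorial_ne_zero d
      have hfid : (Nat.factorial (i + d) : ℂ) ≠ 0 := by exact_mod_cast Nat.factorial_ne_zero (i+d)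
      simp only [hgdef, Function.comp_apply]
      rw [pow_add]
      field_simp
      linear_combination ((a:ℂ)^i * (a:ℂ)^d) * key
    have hgsum : HasSum g (((-1 : ℂ) ^ d * (a:ℂ) ^ d / (Nat.factorial d : ℂ)) * Complex.exp a) := by
      rw [← Function.Injective.hasSum_iff hinj hout, hcomp]
      exact hmul
    calc (∑' k : ℕ, (a : ℂ) ^ k / (Nat.factorial k : ℂ) *
        (if 0 ≤ x - y ∧ x - y ≤ (k : ℤ) then
          (-1 : ℂ) ^ d * (Nat.choose k d : ℂ) else 0))
        = ∑' k : ℕ, g k := by exact tsum_congr hg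
      _ = (((-1 : ℂ) ^ d * (a:ℂ) ^ d / (Nat.factorial d : ℂ)) * Complex.exp a) := hgsum.tsum_eq
      _ = Complex.exp a * (-(a:ℂ)) ^ d / (Nat.factorial d : ℂ) := by
          rw [neg_pow]; ring
  · rw [if_neg h]
    have : ∀ k : ℕ, ((a : ℂ) ^ k / (Nat.factorial k : ℂ) *
        (if 0 ≤ x - y ∧ x - y ≤ (k : ℤ) then
          (-1 : ℂ) ^ (x - y).toNat * (Nat.choose k (x - y).toNat : ℂ) else 0)) = 0 := by
      intro k; rw [if_neg (by tauto), mul_zero]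
    rw [tsum_congr this, tsum_zero]

lemma QinvPow_eq (n : ℕ) (x y : ℤ) :
    QinvPow n x y = if x ≤ y ∧ y ≤ x + n then
      (2:ℂ) ^ (y - x).toNat * (-1) ^ (n - (y - x).toNat) * (Nat.choose n (y - x).toNat : ℂ)
    else 0 := by
  induction n generalizing y with
  | zero =>
    show (if x = y then (1:ℂ) else 0) = _
    by_cases h : x = y
    · subst h
      rw [if_pos rfl, if_pos (⟨le_rfl, by omega⟩ : x ≤ x ∧ x ≤ x + ((0:ℕ):ℤ))]
      simp
    · rw [if_neg h, if_neg (by omega)]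
  | succ n ih =>
    show (∑' z : ℤ, QinvPow n x z * QinvKer z y) = _
    have hsup : ∀ z : ℤ, z ∉ ({y - 1, y} : Finset ℤ) → QinvPow n x z * QinvKer z y = 0 := by
      intro z hz
      simp only [Finset.mem_insert, Finset.mem_singleton] at hz
      push_neg at hz
      have h1 : y ≠ z := fun h => hz.2 h.symm
      have h2 : y ≠ z + 1 := fun h => hz.1 (by omega)
      rw [QinvKer, if_neg h1, if_neg h2]
      simp
    rw [tsum_eq_sum hsup, Finset.sum_pair (by omega : y - 1 ≠ y)]
    have k1 : QinvKer (y - 1) y = 2 := by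
      rw [QinvKer, if_neg (by omega), if_pos (by omega)]; simp
    have k2 : QinvKer y y = -1 := by
      rw [QinvKer, if_pos rfl, if_neg (by omega)]; simp
    rw [k1, k2, ih (y - 1), ih y]
    split_ifs with hA hB hC hD hE hF hG
    · -- A, B (so 1 ≤ j ≤ n)
      have e1 : (y - 1 - x).toNat = (y - x).toNat - 1 := by omega
      obtain ⟨k, hk⟩ : ∃ k, (y - x).toNat = k + 1 := ⟨(y - x).toNat - 1, by omega⟩
      rw [e1, hk]
      have hkn : k + 1 ≤ n := by omega
      have e2 : k + 1 - 1 = k := by omega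
      have e3 : n - k = (n - (k + 1)) + 1 := by omega
      have e4 : n + 1 - (k + 1) = (n - (k + 1)) + 1 := by omega
      rw [e2, e3, e4, Nat.choose_succ_succ n k]
      push_cast
      ring
    · exfalso; omega
    · -- A, ¬B, C : j = n+1
      have e1 : (y - 1 - x).toNat = n := by omega
      have e2 : (y - x).toNat = n + 1 := by omega
      rw [e1, e2]
      have e3 : n - n = 0 := by omega
      have e4 : n + 1 - (n + 1) = 0 := by omega
      rw [e3, e4, Nat.choose_self, Nat.choose_self, pow_succ]
      push_cast
      ring
    · exfalso; omega
    · -- ¬A, B : j = 0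
      have e2 : (y - x).toNat = 0 := by omega
      rw [e2]
      have e3 : n + 1 - 0 = (n - 0) + 1 := by omega
      rw [e3, Nat.choose_zero_right, Nat.choose_zero_right, pow_succ]
      push_cast
      ring
    · exfalso; omega
    · exfalso; omega
    · simp

lemma rhs_eval (t : ℂ) (n : ℕ) (R : ℝ) (hR : 0 < R) (z₁ z₂ : ℤ) :
    (2 * Real.pi * I : ℂ)⁻¹ *
        (∮ w in C(0, R), (1 - w) ^ n * Complex.exp (t * (w - 1 / 2)) /
          ((2:ℂ) ^ (z₂ - z₁) * w ^ ((n : ℤ) + 1 + z₂ - z₁)))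
      = ∑ j ∈ Finset.range (n + 1),
          Complex.exp (-(t/2)) * (2:ℂ) ^ (z₁ - z₂) * (Nat.choose n j) * (-1) ^ j *
            (if 0 ≤ (n : ℤ) + z₂ - z₁ - j then
              t ^ ((n : ℤ) + z₂ - z₁ - j).toNat / (Nat.factorial ((n : ℤ) + z₂ - z₁ - j).toNat : ℂ)
            else 0) := by
  set N : ℤ := (n : ℤ) + 1 + z₂ - z₁ with hN
  set c : ℕ → ℂ := fun j => Complex.exp (-(t/2)) * (2:ℂ) ^ (z₁ - z₂) * (Nat.choose n j) * (-1) ^ j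
    with hc
  have h2 : (2:ℂ) ^ (z₂ - z₁) ≠ 0 := zpow_ne_zero _ two_ne_zero
  have hstep1 : (∮ w in C(0, R), (1 - w) ^ n * Complex.exp (t * (w - 1 / 2)) /
          ((2:ℂ) ^ (z₂ - z₁) * w ^ N))
      = ∮ w in C(0, R), ∑ j ∈ Finset.range (n + 1),
          c j * (Complex.exp (t * w) * w ^ ((j : ℤ) - N)) := by
    refine circleIntegral.integral_congr hR.le fun w hw => ?_
    have hw0 : w ≠ 0 := by
      intro h; rw [Metric.mem_sphere, h] at hw; simp at hw; exact hR.ne' hw.symm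
    have hpow : (1 - w) ^ n
        = ∑ j ∈ Finset.range (n + 1), (-1 : ℂ) ^ j * w ^ j * (Nat.choose n j) := by
      rw [show (1 - w) = -w + 1 by ring, add_pow]
      refine Finset.sum_congr rfl fun j hj => ?_
      rw [neg_pow]; ring
    have hexp : Complex.exp (t * (w - 1 / 2))
        = Complex.exp (t * w) * Complex.exp (-(t/2)) := by
      rw [← Complex.exp_add]; ring_nf
    rw [hpow, hexp, Finset.sum_mul, Finset.sum_div]
    refine Finset.sum_congr rfl fun j hj => ?_
    rw [hc]
    have hzp : (w : ℂ) ^ ((j:ℤ) - N) = w ^ j * (w ^ N)⁻¹ := by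
      rw [zpow_sub₀ hw0, zpow_natCast, div_eq_mul_inv]
    have h2' : ((2:ℂ) ^ (z₂ - z₁))⁻¹ = (2:ℂ) ^ (z₁ - z₂) := by
      rw [← zpow_neg, neg_sub]
    rw [div_eq_mul_inv, mul_inv, hzp, ← h2']
    ring
  rw [hstep1, circleIntegral_finset_sum _ _ _ _ (fun j _ => by
    exact IntervalIntegrable.const_mul (exp_zpow_circleIntegrable t R hR ((j:ℤ) - N)) (c j))]
  rw [Finset.mul_sum]
  refine Finset.sum_congr rfl fun j hj => ?_
  rw [circleIntegral.integral_const_mul, exp_zpow_integral t R hR ((j:ℤ) - N)]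
  have harg : -((j:ℤ) - N) - 1 = (n : ℤ) + z₂ - z₁ - j := by omega
  rw [harg]
  have h2πi : (2 * (Real.pi:ℂ) * I) ≠ 0 := by simp [Real.pi_ne_zero, I_ne_zero]
  by_cases hcond : 0 ≤ (n : ℤ) + z₂ - z₁ - j
  · rw [if_pos hcond, if_pos hcond, mul_left_comm, inv_mul_cancel_left₀ h2πi]
  · rw [if_neg hcond, if_neg hcond, mul_zero, mul_zero]

/-- The kernel `S(z₁,z₂) = (e^{−(t/2)∇⁻} Q^{−n})^*(z₁,z₂)` is given by the contour integral
`(1/2πi)∮ dw (1−w)^n e^{t(w−1/2)} / (2^{z₂−z₁} w^{n+1+z₂−z₁})`. -/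
theorem SM_contour_formula (t : ℝ) (n : ℕ) (R : ℝ) (hR : 0 < R) (z₁ z₂ : ℤ) :
    (∑' z : ℤ, expNablaMinusKer (-(t / 2)) z₂ z * QinvPow n z z₁)
      = (2 * Real.pi * I)⁻¹ *
          ∮ w in C(0, R), (1 - w) ^ n * Complex.exp (t * (w - 1 / 2)) /
            ((2 : ℂ) ^ (z₂ - z₁) * w ^ ((n : ℤ) + 1 + z₂ - z₁)) := by
  rw [rhs_eval (t : ℂ) n R hR z₁ z₂]
  -- closed form of the summand
  have hF : ∀ z : ℤ, expNablaMinusKer (-(t / 2)) z₂ z * QinvPow n z z₁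
      = (if 0 ≤ z₂ - z then
          Complex.exp (-((t:ℂ)/2)) * ((t:ℂ)/2) ^ (z₂ - z).toNat /
            (Nat.factorial (z₂ - z).toNat : ℂ) else 0) *
        (if z ≤ z₁ ∧ z₁ ≤ z + n then
          (2:ℂ) ^ (z₁ - z).toNat * (-1) ^ (n - (z₁ - z).toNat) *
            (Nat.choose n (z₁ - z).toNat : ℂ) else 0) := by
    intro z
    have hcast : ((-(t/2) : ℝ) : ℂ) = -((t:ℂ)/2) := by push_cast; ring
    rw [expNablaMinusKer_eq, QinvPow_eq, hcast, neg_neg]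
  have hsup : ∀ z : ℤ, z ∉ Finset.Icc (z₁ - n) z₁ →
      expNablaMinusKer (-(t / 2)) z₂ z * QinvPow n z z₁ = 0 := by
    intro z hz
    have hno : ¬(z ≤ z₁ ∧ z₁ ≤ z + (n:ℤ)) := by
      simp only [Finset.mem_Icc] at hz; omega
    rw [hF z, if_neg hno, mul_zero]
  rw [tsum_eq_sum hsup]
  rw [← Finset.sum_range_reflect]
  refine Finset.sum_nbij' (fun z => (z₁ - z).toNat) (fun j => z₁ - j) ?_ ?_ ?_ ?_ ?_
  · intro z hz; simp only [Finset.mem_Icc] at hz; beta_reduce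
    simp only [Finset.mem_range]; omega
  · intro j hj; simp only [Finset.mem_range] at hj; beta_reduce
    simp only [Finset.mem_Icc]; omega
  · intro z hz; simp only [Finset.mem_Icc] at hz; beta_reduce; omega
  · intro j hj; simp only [Finset.mem_range] at hj; beta_reduce; omega
  · intro z hz
    simp only [Finset.mem_Icc] at hz
    beta_reduce
    rw [hF z]
    set j := (z₁ - z).toNat with hj
    have hjz : (j : ℤ) = z₁ - z := Int.toNat_of_nonneg (by omega)
    have hjn : j ≤ n := by omega
    have hrefl : n + 1 - 1 - j = n - j := by omega
    rw [hrefl, if_pos (by omega : z ≤ z₁ ∧ z₁ ≤ z + (n:ℤ))]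
    have harg : (n : ℤ) + z₂ - z₁ - (n - j : ℕ) = z₂ - z := by
      have : ((n - j : ℕ) : ℤ) = (n : ℤ) - j := by omega
      omega
    rw [harg, Nat.choose_symm hjn]
    by_cases hz2 : 0 ≤ z₂ - z
    · rw [if_pos hz2, if_pos hz2]
      set d := (z₂ - z).toNat with hd
      have hdz : (d : ℤ) = z₂ - z := Int.toNat_of_nonneg hz2
      have h2 : ((t:ℂ)/2) ^ d = (t:ℂ) ^ d * ((2:ℂ) ^ d)⁻¹ := by
        rw [div_pow]; ring
      have h2' : (2:ℂ) ^ (z₁ - z₂) = (2:ℂ) ^ j * ((2:ℂ) ^ d)⁻¹ := by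
        rw [show z₁ - z₂ = (j : ℤ) - (d : ℤ) by omega, zpow_sub₀ (two_ne_zero),
          zpow_natCast, zpow_natCast, div_eq_mul_inv]
      rw [h2, h2']
      ring
    · rw [if_neg hz2, if_neg hz2]
      ring
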